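/- Suppose μ ∈ K* + Im(A*) and for every z ∈ Ext(K) we have ⊥_z ∩ (μ − Im(A*)) = ∅, where ⊥_z = {γ ∈ K* : ⟨γ,z⟩ = 0}. Then there exists γ̄ ∈ int(K*) ∩ (μ − Im(A*)). -/

import Mathlib

open RealInnerProductSpace

noncomputable section

variable {E F : Type*} [NormedAddCommGroup E] [InnerProductSpace ℝ E]
  [NormedAddCommGroup F] [InnerProductSpace ℝ F]
  [FiniteDimensional ℝ E] [FiniteDimensional ℝ F]

/-- The dual cone `K* = {y : ⟨x,y⟩ ≥ 0 for all x ∈ K}`. -/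
def DualCone (K : Set E) : Set E := {y | ∀ x ∈ K, 0 ≤ ⟪x, y⟫}

/-- A regular cone: closed, convex, a cone, pointed, and full-dimensional. -/
def IsRegularCone (K : Set E) : Prop :=
  IsClosed K ∧ Convex ℝ K ∧ (∀ c : ℝ, 0 < c → ∀ x ∈ K, c • x ∈ K) ∧
    (K ∩ (-K) ⊆ {(0 : E)}) ∧ (interior K).Nonempty

/-- `(μ; η)` is a valid linear inequality for `S`: `⟨μ,x⟩ ≥ η` on `S`. -/
def ValidIneq (S : Set E) (μ : E) (η : ℝ) : Prop := ∀ x ∈ S, η ≤ ⟪μ, x⟫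

/-- `(μ; η)` is a `K`-minimal valid inequality for `S`. -/
def KMinimal (K S : Set E) (μ : E) (η : ℝ) : Prop :=
  μ ≠ 0 ∧ ValidIneq S μ η ∧
    ∀ ρ : E, ∀ ρ₀ : ℝ, ValidIneq S ρ ρ₀ → ρ ≠ μ → μ - ρ ∈ DualCone K → ρ₀ < η

/-- `x` generates an extreme ray of the cone `K`. -/
def IsExtremeRay (K : Set E) (x : E) : Prop :=
  x ∈ K ∧ x ≠ 0 ∧ ∀ y ∈ K, ∀ z ∈ K, x = y + z → ∃ t : ℝ, 0 ≤ t ∧ y = t • x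

/-- Support function of a set `D`. -/
def SuppFn (D : Set F) (z : F) : ℝ := sSup ((fun lam => ⟪z, lam⟫) '' D)

/-- The cut generating set `D_μ = {λ : μ - A*λ ∈ K*}`. -/
def CutGenSet (K : Set E) (A : E →ₗ[ℝ] F) (μ : E) : Set F :=
  {lam | μ - LinearMap.adjoint A lam ∈ DualCone K}

/-- `(μ; η)` is a `K`-sublinear inequality for `S`: condition (A.1(α)) for every
extreme ray α of `K*`, together with validity (A.2). -/
def KSublinear (K S : Set E) (A : E →ₗ[ℝ] F) (μ : E) (η : ℝ) : Prop :=
  μ ≠ 0 ∧ ValidIneq S μ η ∧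
    ∀ α : E, IsExtremeRay (DualCone K) α →
      ∀ u : E, A u = 0 → (∀ v : E, IsExtremeRay K v → ⟪α, v⟫ • u + v ∈ K) →
        0 ≤ ⟪μ, u⟫


section Aux

/-- On a closed cone with a nonzero point, the linear functional `⟪·,e⟫` attains a
minimum on the unit slice. -/
lemma exists_min_on_unit (C : Set E) (hcl : IsClosed C)
    (hsc : ∀ c : ℝ, 0 < c → ∀ x ∈ C, c • x ∈ C)
    {z : E} (hz : z ∈ C) (hz0 : z ≠ 0) (e : E) :
    ∃ u ∈ C, ‖u‖ = 1 ∧ ∀ x ∈ C, ‖x‖ = 1 → ⟪u, e⟫ ≤ ⟪x, e⟫ := by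
  set S : Set E := C ∩ Metric.sphere 0 1 with hS
  have hScl : IsClosed S := hcl.inter Metric.isClosed_sphere
  have hSbdd : Bornology.IsBounded S :=
    (Metric.isBounded_sphere (x := (0 : E)) (r := 1)).subset Set.inter_subset_right
  have hScomp : IsCompact S := Metric.isCompact_of_isClosed_isBounded hScl hSbdd
  have hSne : S.Nonempty := by
    refine ⟨‖z‖⁻¹ • z, hsc _ (inv_pos.2 (norm_pos_iff.2 hz0)) z hz, ?_⟩
    simp [norm_smul, norm_inv, inv_mul_cancel₀ (norm_ne_zero_iff.2 hz0)]
  have hf : Continuous (fun x : E => (⟪x, e⟫ : ℝ)) := continuous_id.inner continuous_const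
  obtain ⟨u, huS, humin⟩ := hScomp.exists_isMinOn hSne hf.continuousOn
  refine ⟨u, huS.1, by simpa using huS.2, fun x hx hx1 => isMinOn_iff.1 humin x ⟨hx, by simp [hx1]⟩⟩

/-- If `γ` is strictly positive on a closed cone minus the origin, it lies in the
interior of the dual cone. -/
lemma mem_interior_dualCone {K : Set E} (hcl : IsClosed K)
    (hsc : ∀ c : ℝ, 0 < c → ∀ x ∈ K, c • x ∈ K)
    {γ : E} (hpos : ∀ x ∈ K, x ≠ 0 → 0 < ⟪x, γ⟫) :
    γ ∈ interior (DualCone K) := by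
  by_cases hK : ∃ z ∈ K, z ≠ 0
  · obtain ⟨z, hz, hz0⟩ := hK
    obtain ⟨u, huK, hu1, humin⟩ := exists_min_on_unit K hcl hsc hz hz0 γ
    have hu0 : u ≠ 0 := by
      intro h; rw [h, norm_zero] at hu1; norm_num at hu1
    have hm0 : 0 < ⟪u, γ⟫ := hpos u huK hu0
    have hball : Metric.ball γ ⟪u, γ⟫ ⊆ DualCone K := by
      intro γ' hγ' x hx
      rcases eq_or_ne x 0 with rfl | hx0
      · simp
      · have hxn : (0:ℝ) < ‖x‖ := norm_pos_iff.2 hx0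
        have hxu : (‖x‖⁻¹ • x) ∈ K := hsc _ (by positivity) x hx
        have hxu1 : ‖‖x‖⁻¹ • x‖ = 1 := by
          simp [norm_smul, inv_mul_cancel₀ hxn.ne']
        have h1 : ⟪u, γ⟫ ≤ ⟪‖x‖⁻¹ • x, γ⟫ := humin _ hxu hxu1
        have h2 : |⟪‖x‖⁻¹ • x, γ' - γ⟫| ≤ ‖γ' - γ‖ := by
          calc |⟪‖x‖⁻¹ • x, γ' - γ⟫| ≤ ‖‖x‖⁻¹ • x‖ * ‖γ' - γ‖ := abs_real_inner_le_norm _ _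
          _ = ‖γ' - γ‖ := by rw [hxu1, one_mul]
        have hdist : ‖γ' - γ‖ < ⟪u, γ⟫ := by
          rw [Metric.mem_ball, dist_eq_norm] at hγ'; exact hγ'
        have hsplit : ⟪‖x‖⁻¹ • x, γ'⟫ = ⟪‖x‖⁻¹ • x, γ⟫ + ⟪‖x‖⁻¹ • x, γ' - γ⟫ := by
          rw [← inner_add_right]
          congr 1
          abel
        have h3 : 0 ≤ ⟪‖x‖⁻¹ • x, γ'⟫ := by
          rw [hsplit]
          have := abs_le.1 h2
          linarith
        have h4 : ⟪‖x‖⁻¹ • x, γ'⟫ = ‖x‖⁻¹ * ⟪x, γ'⟫ := real_inner_smul_left _ _ _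
        rw [h4] at h3
        have h5 := mul_nonneg hxn.le h3
        rwa [← mul_assoc, mul_inv_cancel₀ hxn.ne', one_mul] at h5
    exact mem_interior.2 ⟨Metric.ball γ ⟪u, γ⟫, hball, Metric.isOpen_ball,
      Metric.mem_ball_self hm0⟩
  · push_neg at hK
    have : DualCone K = Set.univ := by
      ext y
      simp only [Set.mem_univ, iff_true]
      intro x hx
      rw [hK x hx, inner_zero_left]
    rw [this, interior_univ]
    trivial

/-- A closed pointed convex cone admits a strictly positive functional. -/
lemma exists_strict_pos (C : Set E) (hcl : IsClosed C) (hconv : Convex ℝ C)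
    (hsc : ∀ c : ℝ, 0 < c → ∀ x ∈ C, c • x ∈ C) (hpt : C ∩ (-C) ⊆ {0})
    (hne : C.Nonempty) :
    ∃ e : E, ∀ x ∈ C, x ≠ 0 → 0 < ⟪x, e⟫ := by
  have hadd : ∀ x ∈ C, ∀ y ∈ C, x + y ∈ C := by
    intro x hx y hy
    have h1 : (1/2 : ℝ) • x + (1/2 : ℝ) • y ∈ C :=
      hconv hx hy (by norm_num) (by norm_num) (by norm_num)
    have h2 := hsc 2 two_pos _ h1
    have : (2:ℝ) • ((1/2 : ℝ) • x + (1/2 : ℝ) • y) = x + y := by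
      rw [smul_add, smul_smul, smul_smul]; norm_num
    rwa [this] at h2
  let CC : ConvexCone ℝ E :=
    ⟨C, fun c hc x hx => hsc c hc x hx, fun x hx y hy => hadd x hx y hy⟩
  have hCC : (CC : Set E) = C := rfl
  have hbip : {y : E | ∀ x ∈ {y : E | ∀ x ∈ C, 0 ≤ ⟪x, y⟫}, 0 ≤ ⟪x, y⟫} = C := by
    obtain ⟨x₁, hx₁⟩ := hne
    have h0C : (0 : E) ∈ C := by
      have ht : Filter.Tendsto (fun n : ℕ => (1 / ((n : ℝ) + 1)) • x₁) Filter.atTop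
          (nhds ((0 : ℝ) • x₁)) := tendsto_one_div_add_atTop_nhds_zero_nat.smul_const x₁
      rw [zero_smul] at ht
      exact hcl.mem_of_tendsto ht (Filter.Eventually.of_forall fun n => hsc _ (by positivity) x₁ hx₁)
    let PC : ProperCone ℝ E :=
      { carrier := C
        add_mem' := fun {a b} ha hb => hadd a ha b hb
        zero_mem' := h0C
        smul_mem' := fun c {x} hx => by
          rcases c.2.lt_or_eq with hc | hc
          · exact hsc c.1 hc x hx
          · change c.1 • x ∈ C
            rw [← hc, zero_smul]; exact h0C
        isClosed' := hcl }
    have := ProperCone.innerDual_innerDual PC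
    exact congrArg SetLike.coe this
  set D : Set E := {y : E | ∀ x ∈ C, 0 ≤ ⟪x, y⟫} with hD
  have hDconv : Convex ℝ D := (ProperCone.innerDual C).convex
  have h0D : (0:E) ∈ D := by
    intro x _; rw [inner_zero_right]
  have hspan : Submodule.span ℝ D = ⊤ := by
    by_contra h
    have hbot : (Submodule.span ℝ D)ᗮ ≠ ⊥ := fun hb =>
      h (Submodule.orthogonal_eq_bot_iff.1 hb)
    obtain ⟨v, hvmem, hv0⟩ := Submodule.exists_mem_ne_zero_of_ne_bot hbot
    have hv : ∀ γ ∈ D, ⟪γ, v⟫ = 0 := fun γ hγ =>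
      (Submodule.mem_orthogonal _ v).1 hvmem γ (Submodule.subset_span hγ)
    have hvC : v ∈ C := by
      rw [← hbip]; intro γ hγ; rw [hv γ hγ]
    have hvC' : -v ∈ C := by
      rw [← hbip]; intro γ hγ; rw [inner_neg_right, hv γ hγ, neg_zero]
    exact hv0 (hpt ⟨hvC, by simpa using hvC'⟩)
  have haff : affineSpan ℝ D = ⊤ := by
    rw [AffineSubspace.affineSpan_eq_top_iff_vectorSpan_eq_top_of_nonempty ℝ E E ⟨0, h0D⟩]
    rw [vectorSpan_def]
    refine le_antisymm le_top ?_
    rw [← hspan]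
    exact Submodule.span_mono (fun x hx => by
      simpa using Set.vsub_mem_vsub hx h0D)
  obtain ⟨e, he⟩ := hDconv.interior_nonempty_iff_affineSpan_eq_top.2 haff
  refine ⟨e, fun x hx hx0 => ?_⟩
  have heD : e ∈ D := interior_subset he
  rcases (heD x hx).lt_or_eq with h | h
  · exact h
  · exfalso
    obtain ⟨ε, hε, hball⟩ := Metric.mem_nhds_iff.1 (mem_interior_iff_mem_nhds.1 he)
    have hxn : (0:ℝ) < ‖x‖ := norm_pos_iff.2 hx0
    set t : ℝ := ε / (2 * ‖x‖) with ht
    have ht0 : 0 < t := by positivity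
    have htx : t * ‖x‖ = ε / 2 := by
      rw [ht]
      field_simp
    have hmem : e - t • x ∈ D := by
      apply hball
      rw [Metric.mem_ball, dist_eq_norm]
      have heq : e - t • x - e = -(t • x) := by abel
      rw [heq, norm_neg, norm_smul, Real.norm_eq_abs, abs_of_pos ht0, htx]
      linarith
    have h5 : 0 ≤ ⟪x, e - t • x⟫ := hmem x hx
    rw [inner_sub_right, real_inner_smul_right, ← h, real_inner_self_eq_norm_sq] at h5
    have h6 : 0 < t * ‖x‖ ^ 2 := by positivity
    linarith

/-- A closed pointed convex cone containing a nonzero point has an extreme ray. -/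
lemma exists_extremeRay (C : Set E) (hcl : IsClosed C) (hconv : Convex ℝ C)
    (hsc : ∀ c : ℝ, 0 < c → ∀ x ∈ C, c • x ∈ C) (hpt : C ∩ (-C) ⊆ {0})
    {z : E} (hz : z ∈ C) (hz0 : z ≠ 0) :
    ∃ x : E, IsExtremeRay C x := by
  obtain ⟨e, he⟩ := exists_strict_pos C hcl hconv hsc hpt ⟨z, hz⟩
  obtain ⟨u, huC, hu1, humin⟩ := exists_min_on_unit C hcl hsc hz hz0 e
  have hu0 : u ≠ 0 := by intro h; rw [h, norm_zero] at hu1; norm_num at hu1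
  have hm0 : 0 < ⟪u, e⟫ := he u huC hu0
  set B : Set E := {x | x ∈ C ∧ ⟪x, e⟫ = 1} with hB
  have hBconv : Convex ℝ B := by
    intro x hx y hy a b ha hb hab
    refine ⟨hconv hx.1 hy.1 ha hb hab, ?_⟩
    rw [inner_add_left, real_inner_smul_left, real_inner_smul_left, hx.2, hy.2]
    linarith
  have hBcl : IsClosed B :=
    hcl.inter (isClosed_eq (continuous_id.inner continuous_const) continuous_const)
  have hBbdd : Bornology.IsBounded B := by
    apply (Metric.isBounded_closedBall (x := (0:E)) (r := ⟪u, e⟫⁻¹)).subset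
    intro x hx
    have hx0 : x ≠ 0 := by
      intro h
      rw [h] at hx
      have h7 : ⟪(0:E), e⟫ = 1 := hx.2
      rw [inner_zero_left] at h7
      exact one_ne_zero h7.symm
    have hxn : (0:ℝ) < ‖x‖ := norm_pos_iff.2 hx0
    have hxu : (‖x‖⁻¹ • x) ∈ C := hsc _ (by positivity) x hx.1
    have h1 : ⟪u, e⟫ ≤ ⟪‖x‖⁻¹ • x, e⟫ := humin _ hxu (by
      simp [norm_smul, inv_mul_cancel₀ hxn.ne'])
    rw [real_inner_smul_left, hx.2, mul_one] at h1
    rw [Metric.mem_closedBall, dist_zero_right]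
    have h2 : ‖x‖ * ⟪u, e⟫ ≤ 1 := by
      have h3 := mul_le_mul_of_nonneg_left h1 hxn.le
      rwa [mul_inv_cancel₀ hxn.ne'] at h3
    calc ‖x‖ = ‖x‖ * ⟪u, e⟫ * ⟪u, e⟫⁻¹ := by field_simp
    _ ≤ 1 * ⟪u, e⟫⁻¹ := mul_le_mul_of_nonneg_right h2 (by positivity)
    _ = ⟪u, e⟫⁻¹ := one_mul _
  have hBcomp : IsCompact B := Metric.isCompact_of_isClosed_isBounded hBcl hBbdd
  have hBne : B.Nonempty := by
    have hze : 0 < ⟪z, e⟫ := he z hz hz0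
    refine ⟨⟪z, e⟫⁻¹ • z, hsc _ (by positivity) z hz, ?_⟩
    rw [real_inner_smul_left, inv_mul_cancel₀ hze.ne']
  obtain ⟨x, hx⟩ := hBcomp.extremePoints_nonempty hBne
  rw [mem_extremePoints] at hx
  have hx0 : x ≠ 0 := by
    intro h; rw [h] at hx
    exact one_ne_zero ((inner_zero_left e (𝕜 := ℝ)) ▸ hx.1.2).symm
  refine ⟨x, hx.1.1, hx0, ?_⟩
  intro y hy w hw hsum
  have hab : ⟪y, e⟫ + ⟪w, e⟫ = 1 := by
    rw [← inner_add_left, ← hsum]; exact hx.1.2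
  rcases eq_or_ne y 0 with rfl | hy0
  · exact ⟨0, le_refl 0, by rw [zero_smul]⟩
  · have ha : 0 < ⟪y, e⟫ := he y hy hy0
    rcases eq_or_ne w 0 with rfl | hw0
    · exact ⟨1, zero_le_one, by rw [one_smul, hsum, add_zero]⟩
    · have hb : 0 < ⟪w, e⟫ := he w hw hw0
      have hy' : (⟪y, e⟫⁻¹ • y) ∈ B :=
        ⟨hsc _ (by positivity) y hy, by rw [real_inner_smul_left, inv_mul_cancel₀ ha.ne']⟩
      have hw' : (⟪w, e⟫⁻¹ • w) ∈ B :=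
        ⟨hsc _ (by positivity) w hw, by rw [real_inner_smul_left, inv_mul_cancel₀ hb.ne']⟩
      have hseg : x ∈ openSegment ℝ (⟪y, e⟫⁻¹ • y) (⟪w, e⟫⁻¹ • w) := by
        refine ⟨⟪y, e⟫, ⟪w, e⟫, ha, hb, hab, ?_⟩
        rw [smul_inv_smul₀ ha.ne', smul_inv_smul₀ hb.ne']
        exact hsum.symm
      obtain ⟨h1, _⟩ := hx.2 _ hy' _ hw' hseg
      exact ⟨⟪y, e⟫, ha.le, by rw [← h1, smul_inv_smul₀ ha.ne']⟩

end Aux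

/-- If `⊥_z ∩ (μ − Im(A*)) = ∅` for every extreme ray `z` of `K`, then
`int(K*) ∩ (μ − Im(A*)) ≠ ∅`. -/
theorem stmt15 (K : Set E) (A : E →ₗ[ℝ] F)
    (hK : IsRegularCone K)
    (μ : E) (hμ : ∃ γ ∈ DualCone K, ∃ lam : F, μ = γ + LinearMap.adjoint A lam)
    (hperp : ∀ z : E, IsExtremeRay K z →
      ¬ ∃ γ : E, γ ∈ DualCone K ∧ ⟪γ, z⟫ = 0 ∧
        ∃ lam : F, γ = μ - LinearMap.adjoint A lam) :
    ∃ γ : E, γ ∈ interior (DualCone K) ∧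
      ∃ lam : F, γ = μ - LinearMap.adjoint A lam := by
  obtain ⟨γ₀, hγ₀, lam₀, hμeq⟩ := hμ
  obtain ⟨hclK, hconvK, hscK, hptK, hintK⟩ := hK
  have hγμ : γ₀ = μ - LinearMap.adjoint A lam₀ := by rw [hμeq]; abel
  have hpos : ∀ x ∈ K, x ≠ 0 → 0 < ⟪x, γ₀⟫ := by
    intro x hx hx0
    rcases (hγ₀ x hx).lt_or_eq with h | h
    · exact h
    · exfalso
      set C : Set E := {w | w ∈ K ∧ ⟪w, γ₀⟫ = 0} with hC
      have hCcl : IsClosed C :=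
        hclK.inter (isClosed_eq (continuous_id.inner continuous_const) continuous_const)
      have hCconv : Convex ℝ C := by
        intro p hp q hq a b ha hb hab
        refine ⟨hconvK hp.1 hq.1 ha hb hab, ?_⟩
        rw [inner_add_left, real_inner_smul_left, real_inner_smul_left, hp.2, hq.2]
        ring
      have hCsc : ∀ c : ℝ, 0 < c → ∀ w ∈ C, c • w ∈ C := by
        intro c hc w hw
        exact ⟨hscK c hc w hw.1, by rw [real_inner_smul_left, hw.2, mul_zero]⟩
      have hCpt : C ∩ (-C) ⊆ {0} := by
        intro w hw
        exact hptK ⟨hw.1.1, (hw.2 : -w ∈ C).1⟩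
      obtain ⟨v, hvray⟩ := exists_extremeRay C hCcl hCconv hCsc hCpt ⟨hx, h.symm⟩ hx0
      have hvK : IsExtremeRay K v := by
        refine ⟨hvray.1.1, hvray.2.1, ?_⟩
        intro y hy w hw hsum
        have hy0 : 0 ≤ ⟪y, γ₀⟫ := hγ₀ y hy
        have hw0 : 0 ≤ ⟪w, γ₀⟫ := hγ₀ w hw
        have hsum0 : ⟪y, γ₀⟫ + ⟪w, γ₀⟫ = 0 := by
          rw [← inner_add_left, ← hsum]; exact hvray.1.2
        exact hvray.2.2 y ⟨hy, by linarith⟩ w ⟨hw, by linarith⟩ hsum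
      exact hperp v hvK ⟨γ₀, hγ₀, by rw [real_inner_comm]; exact hvray.1.2, lam₀, hγμ⟩
  exact ⟨γ₀, mem_interior_dualCone hclK hscK hpos, lam₀, hγμ⟩
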